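/- Let X be a real Banach space with property (𝒦) such that every compact operator X → X factors through a real Hilbert space (i.e., for every compact v : X → X there are a real Hilbert space H and bounded operators a : X → H and b : H → X with v = b ∘ a). Then X is isomorphic (linearly homeomorphic) to a Hilbert space. -/

import Mathlib

set_option maxSynthPendingDepth 3

open Filter Topology Metric NormedSpace Function

/-- `u` is a finite-rank operator: its range is finite-dimensional. -/
def FinRankOp {X Y : Type*} [NormedAddCommGroup X] [NormedSpace ℝ X]
    [NormedAddCommGroup Y] [NormedSpace ℝ Y] (u : X →L[ℝ] Y) : Prop :=
  FiniteDimensional ℝ (LinearMap.range (u : X →ₗ[ℝ] Y))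

/-- `u` is approximable: a limit in operator norm of finite-rank operators. -/
def ApproxOp {X Y : Type*} [NormedAddCommGroup X] [NormedSpace ℝ X]
    [NormedAddCommGroup Y] [NormedSpace ℝ Y] (u : X →L[ℝ] Y) : Prop :=
  u ∈ closure {f : X →L[ℝ] Y | FinRankOp f}

/-- `u` is a compact operator: it maps the closed unit ball to a relatively compact set. -/
def CompactOp {X Y : Type*} [NormedAddCommGroup X] [NormedSpace ℝ X]
    [NormedAddCommGroup Y] [NormedSpace ℝ Y] (u : X →L[ℝ] Y) : Prop :=
  IsCompact (closure (u '' Metric.closedBall 0 1))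

/-- Property (𝒦): every compact subset is contained in the closure of the image of the
closed unit ball under some compact operator `X → X`. -/
def PropertyK (X : Type*) [NormedAddCommGroup X] [NormedSpace ℝ X] : Prop :=
  ∀ K : Set X, IsCompact K →
    ∃ v : X →L[ℝ] X, CompactOp v ∧ K ⊆ closure (v '' Metric.closedBall 0 1)

/-- Property (F̄): every compact subset is contained in the closure of the image of the
closed unit ball under some approximable operator `X → X`. -/
def PropertyF (X : Type*) [NormedAddCommGroup X] [NormedSpace ℝ X] : Prop :=
  ∀ K : Set X, IsCompact K →
    ∃ v : X →L[ℝ] X, ApproxOp v ∧ K ⊆ closure (v '' Metric.closedBall 0 1)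

/-- `X` is isomorphic (linearly homeomorphic) to a real Hilbert space. -/
def IsomorphicToHilbert (X : Type u) [NormedAddCommGroup X] [NormedSpace ℝ X] : Prop :=
  ∃ (H : Type u) (_ : NormedAddCommGroup H) (_ : InnerProductSpace ℝ H) (_ : CompleteSpace H),
    Nonempty (X ≃L[ℝ] H)

open Pointwise

lemma isClosed_image_closedBall_hilbert {H : Type*} [NormedAddCommGroup H]
    [InnerProductSpace ℝ H] [CompleteSpace H] {X : Type*} [NormedAddCommGroup X]
    [NormedSpace ℝ X] (b : H →L[ℝ] X) (r : ℝ) :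
    IsClosed (b '' Metric.closedBall 0 r) := by
  refine isClosed_of_closure_subset ?_
  intro x hx
  obtain ⟨y, hy, hyx⟩ := mem_closure_iff_seq_limit.1 hx
  choose hseq hmem hb using fun n => hy n
  -- hseq : ℕ → H with hmem : hseq n ∈ closedBall 0 r, hb : b (hseq n) = y n
  set T := InnerProductSpace.toDual ℝ H with hT
  set ψ : ℕ → WeakDual ℝ H := fun n => StrongDual.toWeakDual (T (hseq n)) with hψ
  have hScomp : IsCompact (WeakDual.toStrongDual ⁻¹' Metric.closedBall (0 : StrongDual ℝ H) r) :=
    WeakDual.isCompact_closedBall (𝕜 := ℝ) (E := H) 0 r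
  have hψS : ∀ n, ψ n ∈ WeakDual.toStrongDual ⁻¹' Metric.closedBall (0 : StrongDual ℝ H) r := by
    intro n
    simp only [Set.mem_preimage, mem_closedBall_zero_iff]
    have : ‖T (hseq n)‖ = ‖hseq n‖ := T.norm_map _
    rw [show WeakDual.toStrongDual (ψ n) = T (hseq n) from rfl, this]
    exact mem_closedBall_zero_iff.1 (hmem n)
  set U : Ultrafilter ℕ := Ultrafilter.of Filter.atTop with hU
  have hUle : (U : Filter ℕ) ≤ Filter.atTop := Ultrafilter.of_le _
  obtain ⟨φ, hφS, hφ⟩ := hScomp.ultrafilter_le_nhds (U.map ψ)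
    (by rw [le_principal_iff, Ultrafilter.coe_map, Filter.mem_map]; exact Filter.univ_mem' hψS)
  have hφT : Filter.Tendsto ψ U (𝓝 φ) := hφ
  set hinf : H := T.symm (WeakDual.toStrongDual φ) with hhinf
  have hnorm : ‖hinf‖ ≤ r := by
    have := T.symm.norm_map (WeakDual.toStrongDual φ)
    rw [hhinf, this]
    simpa only [Set.mem_preimage, mem_closedBall_zero_iff] using hφS
  refine ⟨hinf, mem_closedBall_zero_iff.2 hnorm, ?_⟩
  rw [NormedSpace.eq_iff_forall_dual_eq (𝕜 := ℝ)]
  intro g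
  set w : H := T.symm (g.comp b) with hw
  have hgb : ∀ u : H, g (b u) = inner ℝ w u := by
    intro u
    have : T w = g.comp b := T.apply_symm_apply _
    calc g (b u) = (g.comp b) u := rfl
      _ = (T w) u := by rw [this]
      _ = inner ℝ w u := InnerProductSpace.toDual_apply_apply
  -- limit of evaluations
  have h1 : Filter.Tendsto (fun n => (ψ n) w) U (𝓝 (φ w)) :=
    ((WeakDual.eval_continuous w).tendsto φ).comp hφT
  have hψw : ∀ n, (ψ n) w = g (b (hseq n)) := by
    intro n
    have : (ψ n) w = inner ℝ (hseq n) w := InnerProductSpace.toDual_apply_apply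
    rw [this, real_inner_comm, ← hgb]
  have hφw : φ w = g (b hinf) := by
    have h2 : φ w = inner ℝ hinf w := by
      have : WeakDual.toStrongDual φ = T hinf := (T.apply_symm_apply _).symm
      calc φ w = (WeakDual.toStrongDual φ) w := rfl
        _ = (T hinf) w := by rw [this]
        _ = inner ℝ hinf w := InnerProductSpace.toDual_apply_apply
    rw [h2, real_inner_comm, ← hgb]
  have h3 : Filter.Tendsto (fun n => g (b (hseq n))) U (𝓝 (g x)) := by
    have : Filter.Tendsto (fun n => g (y n)) Filter.atTop (𝓝 (g x)) :=
      (g.continuous.tendsto x).comp hyx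
    have h4 : Filter.Tendsto (fun n => g (y n)) U (𝓝 (g x)) := this.mono_left hUle
    refine h4.congr fun n => by rw [hb n]
  have h5 : Filter.Tendsto (fun n => g (b (hseq n))) U (𝓝 (g (b hinf))) := by
    rw [← hφw]
    exact h1.congr fun n => (hψw n)
  exact (tendsto_nhds_unique h5 h3)


lemma exists_factor_cover (X : Type u) [NormedAddCommGroup X]
    [NormedSpace ℝ X] [CompleteSpace X] (hX : PropertyK X)
    (h : ∀ v : X →L[ℝ] X, CompactOp v →
      ∃ (H : Type u) (_ : NormedAddCommGroup H) (_ : InnerProductSpace ℝ H)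
        (_ : CompleteSpace H) (a : X →L[ℝ] H) (b : H →L[ℝ] X), v = b.comp a)
    (K : Set X) (hK : IsCompact K) :
    ∃ (H : Type u) (g1 : NormedAddCommGroup H) (g2 : InnerProductSpace ℝ H)
      (g3 : CompleteSpace H) (b : H →L[ℝ] X) (r : ℝ), ‖b‖ ≤ 1 ∧ 1 ≤ r ∧
        K ⊆ b '' Metric.closedBall 0 r := by
  obtain ⟨v, hv, hKv⟩ := hX K hK
  obtain ⟨H, g1, g2, g3, a, b, hab⟩ := h v hv
  -- v '' B ⊆ b '' closedBall 0 ‖a‖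
  have h1 : v '' Metric.closedBall 0 1 ⊆ b '' Metric.closedBall 0 ‖a‖ := by
    rintro x ⟨z, hz, rfl⟩
    refine ⟨a z, ?_, by rw [hab]; rfl⟩
    rw [mem_closedBall_zero_iff]
    calc ‖a z‖ ≤ ‖a‖ * ‖z‖ := a.le_opNorm z
      _ ≤ ‖a‖ * 1 := by
          have := mem_closedBall_zero_iff.1 hz
          exact mul_le_mul_of_nonneg_left this (norm_nonneg a)
      _ = ‖a‖ := mul_one _
  have h2 : K ⊆ b '' Metric.closedBall 0 ‖a‖ :=
    hKv.trans (closure_minimal h1 (isClosed_image_closedBall_hilbert b ‖a‖))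
  -- normalize b
  set M : ℝ := max ‖b‖ 1 with hM
  have hM1 : (1:ℝ) ≤ M := le_max_right _ _
  have hM0 : (0:ℝ) < M := lt_of_lt_of_le one_pos hM1
  refine ⟨H, g1, g2, g3, M⁻¹ • b, M * max ‖a‖ 1, ?_, ?_, ?_⟩
  · refine ContinuousLinearMap.opNorm_le_bound _ zero_le_one (fun x => ?_)
    rw [ContinuousLinearMap.smul_apply, norm_smul, norm_inv, Real.norm_eq_abs, abs_of_pos hM0,
      one_mul]
    rw [inv_mul_le_iff₀ hM0]
    calc ‖b x‖ ≤ ‖b‖ * ‖x‖ := b.le_opNorm x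
      _ ≤ M * ‖x‖ := mul_le_mul_of_nonneg_right (le_max_left _ _) (norm_nonneg x)
  · calc (1:ℝ) = 1 * 1 := (one_mul 1).symm
      _ ≤ M * max ‖a‖ 1 := by
          exact mul_le_mul hM1 (le_max_right _ _) one_pos.le (le_trans one_pos.le hM1)
  · intro x hx
    obtain ⟨z, hz, rfl⟩ := h2 hx
    refine ⟨M • z, ?_, ?_⟩
    · rw [mem_closedBall_zero_iff] at hz ⊢
      rw [norm_smul, Real.norm_eq_abs, abs_of_pos hM0]
      exact mul_le_mul_of_nonneg_left (hz.trans (le_max_left _ _)) hM0.le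
    · rw [ContinuousLinearMap.smul_apply, map_smul, smul_smul, inv_mul_cancel₀ hM0.ne', one_smul]

lemma uniform_cover (X : Type u) [NormedAddCommGroup X]
    [NormedSpace ℝ X] [CompleteSpace X] (hX : PropertyK X)
    (h : ∀ v : X →L[ℝ] X, CompactOp v →
      ∃ (H : Type u) (_ : NormedAddCommGroup H) (_ : InnerProductSpace ℝ H)
        (_ : CompleteSpace H) (a : X →L[ℝ] H) (b : H →L[ℝ] X), v = b.comp a) :
    ∃ C : ℝ, 1 ≤ C ∧ ∀ K : Set X, IsCompact K → K ⊆ Metric.closedBall 0 1 →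
      ∃ (H : Type u) (g1 : NormedAddCommGroup H) (g2 : InnerProductSpace ℝ H)
        (g3 : CompleteSpace H) (b : H →L[ℝ] X), ‖b‖ ≤ 1 ∧
          K ⊆ b '' Metric.closedBall 0 C := by
  by_contra hcon
  push_neg at hcon
  have hn : ∀ n : ℕ, ∃ K : Set X, IsCompact K ∧ K ⊆ Metric.closedBall 0 1 ∧
      ∀ (H : Type u) (g1 : NormedAddCommGroup H) (g2 : InnerProductSpace ℝ H)
        (g3 : CompleteSpace H) (b : H →L[ℝ] X), ‖b‖ ≤ 1 →
          ¬ K ⊆ b '' Metric.closedBall 0 ((4:ℝ)^n) := by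
    intro n
    obtain ⟨K, hK1, hK2, hK3⟩ := hcon ((4:ℝ)^n) (one_le_pow₀ (by norm_num))
    exact ⟨K, hK1, hK2, hK3⟩
  choose Kf hcomp hball hviol using hn
  set c : ℕ → ℝ := fun n => (1/2)^n with hc
  have hc0 : ∀ n, 0 < c n := fun n => pow_pos (by norm_num) n
  have hc1 : ∀ n, c n ≤ 1 := fun n => pow_le_one₀ (by norm_num) (by norm_num)
  set S : Set X := ⋃ n, c n • Kf n with hS
  -- norm bound on members of c n • Kf n
  have hnormS : ∀ n, ∀ x ∈ c n • Kf n, ‖x‖ ≤ c n := by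
    rintro n x ⟨y, hy, rfl⟩
    have hy1 : ‖y‖ ≤ 1 := mem_closedBall_zero_iff.1 (hball n hy)
    rw [norm_smul, Real.norm_eq_abs, abs_of_pos (hc0 n)]
    calc c n * ‖y‖ ≤ c n * 1 := mul_le_mul_of_nonneg_left hy1 (hc0 n).le
      _ = c n := mul_one _
  have htb : TotallyBounded S := by
    rw [Metric.totallyBounded_iff]
    intro ε hε
    obtain ⟨N, hN⟩ := exists_pow_lt_of_lt_one hε (by norm_num : (1:ℝ)/2 < 1)
    set A : Set X := ⋃ n ∈ Finset.range (N+1), c n • Kf n with hA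
    have hAc : IsCompact A := by
      refine (Finset.range (N+1)).finite_toSet.isCompact_biUnion (fun n _ => ?_)
      exact (hcomp n).smul (c n)
    obtain ⟨t, htf, htc⟩ := Metric.totallyBounded_iff.1 hAc.totallyBounded ε hε
    refine ⟨t ∪ {0}, htf.union (Set.finite_singleton 0), ?_⟩
    rintro x hx
    obtain ⟨n, hxn⟩ := Set.mem_iUnion.1 hx
    by_cases hnN : n ≤ N
    · have hnm : n ∈ Finset.range (N+1) := Finset.mem_range.2 (by omega)
      have hxA : x ∈ A := Set.mem_biUnion hnm hxn
      have := htc hxA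
      revert this
      refine fun hh => Set.mem_of_subset_of_mem ?_ hh
      exact Set.iUnion₂_mono' fun i hi => ⟨i, Or.inl hi, le_refl _⟩
    · have hxb : ‖x‖ < ε := by
        have h1 : ‖x‖ ≤ c n := hnormS n x hxn
        have h2 : c n ≤ c N := pow_le_pow_of_le_one (by norm_num) (by norm_num) (Nat.not_le.1 hnN).le
        exact lt_of_le_of_lt (h1.trans h2) hN
      refine Set.mem_biUnion (Set.mem_union_right _ rfl) ?_
      rwa [Metric.mem_ball, dist_zero_right]
  have hKbigC : IsCompact (closure S) :=
    htb.closure.isCompact_of_isClosed isClosed_closure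
  have hKbigB : closure S ⊆ Metric.closedBall 0 1 := by
    refine closure_minimal ?_ Metric.isClosed_closedBall
    rintro x hx
    obtain ⟨n, hxn⟩ := Set.mem_iUnion.1 hx
    exact mem_closedBall_zero_iff.2 ((hnormS n x hxn).trans (hc1 n))
  obtain ⟨H, g1, g2, g3, b, r, hb1, hr1, hcov⟩ :=
    exists_factor_cover X hX h (closure S) hKbigC
  obtain ⟨n, hrn⟩ := pow_unbounded_of_one_lt r (by norm_num : (1:ℝ) < 2)
  refine hviol n H g1 g2 g3 b hb1 ?_
  intro x hx
  have hcx : c n • x ∈ closure S := by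
    refine subset_closure ?_
    exact Set.mem_iUnion.2 ⟨n, ⟨x, hx, rfl⟩⟩
  obtain ⟨z, hz, hbz⟩ := hcov hcx
  refine ⟨(2:ℝ)^n • z, ?_, ?_⟩
  · rw [mem_closedBall_zero_iff] at hz ⊢
    rw [norm_smul, Real.norm_eq_abs, abs_of_pos (pow_pos two_pos n)]
    calc (2:ℝ)^n * ‖z‖ ≤ (2:ℝ)^n * (2:ℝ)^n :=
          mul_le_mul_of_nonneg_left (hz.trans hrn.le) (pow_pos two_pos n).le
      _ = (4:ℝ)^n := by rw [← mul_pow]; norm_num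
  · rw [map_smul, hbz, smul_smul]
    have : (2:ℝ)^n * c n = 1 := by
      rw [hc, ← mul_pow]; norm_num
    rw [this, one_smul]

lemma finset_form {X : Type u} [NormedAddCommGroup X] [NormedSpace ℝ X]
    {H : Type u} [NormedAddCommGroup H] [InnerProductSpace ℝ H] [CompleteSpace H]
    (b : H →L[ℝ] X) (hb : ‖b‖ ≤ 1) (C : ℝ) (F : Finset X)
    (hF : ∀ x ∈ F, ∃ h : H, b h = x ∧ ‖h‖ ≤ C * ‖x‖) :
    ∃ p : X → X → ℝ,
      (∀ x y, p x y = p y x) ∧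
      (∀ x ∈ F, ∀ y ∈ F, |p x y| ≤ (C * ‖x‖) * (C * ‖y‖)) ∧
      (∀ x ∈ F, ‖x‖^2 ≤ p x x) ∧
      (∀ x y z : X, x ∈ F → y ∈ F → x + y ∈ F → p (x+y) z = p x z + p y z) ∧
      (∀ (c : ℝ) (x y : X), x ∈ F → c • x ∈ F → p (c • x) y = c * p x y) := by
  classical
  set K : Submodule ℝ H := LinearMap.ker (b : H →ₗ[ℝ] X) with hK
  haveI : CompleteSpace K := (ContinuousLinearMap.isClosed_ker b).completeSpace_coe
  set P : H →L[ℝ] ↥Kᗮ := Kᗮ.orthogonalProjectionOnto with hP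
  set φ : X → H := fun x =>
    if hx : ∃ h : H, b h = x ∧ ‖h‖ ≤ C * ‖x‖ then hx.choose else 0 with hφ
  set ψ : X → H := fun x => (P (φ x) : H) with hψ
  have hφspec : ∀ x ∈ F, b (φ x) = x ∧ ‖φ x‖ ≤ C * ‖x‖ := by
    intro x hx
    have hex := hF x hx
    rw [hφ]
    simp only [dif_pos hex]
    exact hex.choose_spec
  have hbP : ∀ u : H, b ((P u : H)) = b u := by
    intro u
    have h1 : u - (P u : H) ∈ Kᗮᗮ := Kᗮ.sub_starProjection_mem_orthogonal u
    rw [Submodule.orthogonal_orthogonal] at h1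
    have h2 : b (u - (P u : H)) = 0 := h1
    rw [map_sub, sub_eq_zero] at h2
    exact h2.symm
  have hPker : ∀ u : H, b u = 0 → P u = 0 := by
    intro u hu
    refine Submodule.orthogonalProjectionOnto_apply_of_mem_orthogonal ?_
    exact Submodule.le_orthogonal_orthogonal K hu
  have hψnorm : ∀ x ∈ F, ‖ψ x‖ ≤ C * ‖x‖ := by
    intro x hx
    calc ‖ψ x‖ = ‖P (φ x)‖ := rfl
      _ ≤ ‖P‖ * ‖φ x‖ := (P.le_opNorm _)
      _ ≤ 1 * ‖φ x‖ := by
          exact mul_le_mul_of_nonneg_right (Kᗮ.orthogonalProjectionOnto_norm_le) (norm_nonneg _)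
      _ = ‖φ x‖ := one_mul _
      _ ≤ C * ‖x‖ := (hφspec x hx).2
  have hψlow : ∀ x ∈ F, ‖x‖ ≤ ‖ψ x‖ := by
    intro x hx
    calc ‖x‖ = ‖b (φ x)‖ := by rw [(hφspec x hx).1]
      _ = ‖b (ψ x)‖ := by rw [hψ]; rw [hbP]
      _ ≤ ‖b‖ * ‖ψ x‖ := b.le_opNorm _
      _ ≤ 1 * ‖ψ x‖ := mul_le_mul_of_nonneg_right hb (norm_nonneg _)
      _ = ‖ψ x‖ := one_mul _
  refine ⟨fun x y => inner (𝕜 := ℝ) (ψ x) (ψ y), ?_, ?_, ?_, ?_, ?_⟩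
  · intro x y; exact real_inner_comm _ _
  · intro x hx y hy
    calc |inner (𝕜 := ℝ) (ψ x) (ψ y)| ≤ ‖ψ x‖ * ‖ψ y‖ := abs_real_inner_le_norm _ _
      _ ≤ (C * ‖x‖) * (C * ‖y‖) := by
          refine mul_le_mul (hψnorm x hx) (hψnorm y hy) (norm_nonneg _) ?_
          exact le_trans (norm_nonneg (ψ x)) (hψnorm x hx)
  · intro x hx
    calc ‖x‖^2 ≤ ‖ψ x‖^2 := pow_le_pow_left₀ (norm_nonneg x) (hψlow x hx) 2
      _ = inner (𝕜 := ℝ) (ψ x) (ψ x) := (real_inner_self_eq_norm_sq _).symm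
  · intro x y z hx hy hxy
    have hadd : ψ (x + y) = ψ x + ψ y := by
      have h0 : b (φ (x+y) - φ x - φ y) = 0 := by
        rw [map_sub, map_sub, (hφspec x hx).1, (hφspec y hy).1, (hφspec _ hxy).1]
        abel
      have h1 := hPker _ h0
      rw [map_sub, map_sub, sub_sub, sub_eq_zero] at h1
      rw [hψ]
      simp only []
      rw [h1, Submodule.coe_add]
    simp only [hadd, inner_add_left]
  · intro c x y hx hcx
    have hsmul : ψ (c • x) = c • ψ x := by
      have h0 : b (φ (c • x) - c • φ x) = 0 := by
        rw [map_sub, map_smul, (hφspec x hx).1, (hφspec _ hcx).1, sub_self]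
      have := hPker _ h0
      rw [map_sub, map_smul, sub_eq_zero] at this
      rw [hψ]
      simp only []
      rw [this, Submodule.coe_smul]
    simp only [hsmul, real_inner_smul_left]

/-- Type copy used to carry the new Hilbertian structure. -/
def HilbertCopy (X : Type u) : Type u := X

lemma assembly {X : Type u} [NormedAddCommGroup X] [NormedSpace ℝ X] [CompleteSpace X]
    (Φ : X → X → ℝ) (C : ℝ) (hC : 0 ≤ C)
    (hsymm : ∀ x y, Φ x y = Φ y x)
    (haddl : ∀ x y z, Φ (x + y) z = Φ x z + Φ y z)
    (hsmull : ∀ (c : ℝ) (x y : X), Φ (c • x) y = c * Φ x y)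
    (hlow : ∀ x, ‖x‖^2 ≤ Φ x x)
    (hhigh : ∀ x, Φ x x ≤ C^2 * ‖x‖^2) :
    IsomorphicToHilbert X := by
  letI ac : AddCommGroup (HilbertCopy X) := inferInstanceAs (AddCommGroup X)
  letI mo : Module ℝ (HilbertCopy X) := inferInstanceAs (Module ℝ X)
  let fromCopy : HilbertCopy X → X := fun x => x
  have hnonneg : ∀ x : X, (0:ℝ) ≤ Φ x x := fun x => le_trans (sq_nonneg ‖x‖) (hlow x)
  let c : InnerProductSpace.Core ℝ (HilbertCopy X) :=
    { inner := fun x y => Φ x y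
      conj_inner_symm := fun x y => by simpa using hsymm y x
      re_inner_nonneg := fun x => by simpa using hnonneg x
      add_left := fun x y z => haddl x y z
      smul_left := fun x y r => by simp only [conj_trivial]; exact hsmull r x y
      definite := fun x hx => by
        have h1 : ‖fromCopy x‖^2 ≤ 0 := le_trans (hlow (fromCopy x)) (le_of_eq hx)
        have h2 : ‖fromCopy x‖ = 0 := by nlinarith [norm_nonneg (fromCopy x)]
        exact norm_eq_zero.1 h2 }
  letI g1 : NormedAddCommGroup (HilbertCopy X) := c.toNormedAddCommGroup
  letI ns : NormedSpace ℝ (HilbertCopy X) := InnerProductSpace.Core.toNormedSpace (c := c.toCore)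
  letI g2 : InnerProductSpace ℝ (HilbertCopy X) := InnerProductSpace.ofCore c.toCore
  have hnorm_eq : ∀ x : HilbertCopy X, ‖x‖ = Real.sqrt (Φ x x) := fun _ => rfl
  have hlb' : ∀ x : X, ‖x‖ ≤ Real.sqrt (Φ x x) := by
    intro x
    have : ‖x‖ = Real.sqrt (‖x‖^2) := (Real.sqrt_sq (norm_nonneg x)).symm
    rw [this]
    exact Real.sqrt_le_sqrt (hlow x)
  have hub' : ∀ x : X, Real.sqrt (Φ x x) ≤ C * ‖x‖ := by
    intro x
    have h2 : Real.sqrt (C^2 * ‖x‖^2) = C * ‖x‖ := by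
      rw [show C^2 * ‖x‖^2 = (C * ‖x‖)^2 by ring]
      exact Real.sqrt_sq (mul_nonneg hC (norm_nonneg x))
    rw [← h2]
    exact Real.sqrt_le_sqrt (hhigh x)
  let ℓ : X ≃ₗ[ℝ] HilbertCopy X := LinearEquiv.refl ℝ X
  have hcont1 : Continuous (ℓ : X → HilbertCopy X) := by
    refine AddMonoidHomClass.continuous_of_bound (ℓ : X →ₗ[ℝ] HilbertCopy X) C (fun x => ?_)
    exact le_trans (le_of_eq (hnorm_eq _)) (hub' x)
  have hcont2 : Continuous (ℓ.symm : HilbertCopy X → X) := by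
    refine AddMonoidHomClass.continuous_of_bound (ℓ.symm : HilbertCopy X →ₗ[ℝ] X) 1 (fun x => ?_)
    rw [one_mul]
    exact le_trans (hlb' _) (le_of_eq (hnorm_eq x).symm)
  let e : X ≃L[ℝ] HilbertCopy X :=
    { ℓ with continuous_toFun := hcont1, continuous_invFun := hcont2 }
  let uu : X ≃ᵤ HilbertCopy X :=
    { toEquiv := ℓ.toEquiv
      uniformContinuous_toFun := (e : X →L[ℝ] HilbertCopy X).uniformContinuous
      uniformContinuous_invFun := (e.symm : HilbertCopy X →L[ℝ] X).uniformContinuous }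
  letI g3 : CompleteSpace (HilbertCopy X) := uu.completeSpace_iff.1 ‹CompleteSpace X›
  exact ⟨HilbertCopy X, g1, g2, g3, ⟨e⟩⟩

section Glue
variable {X : Type u} [NormedAddCommGroup X] [NormedSpace ℝ X] [CompleteSpace X]

lemma glue (C : ℝ) (hC1 : 1 ≤ C) (p : Finset X → X → X → ℝ)
    (hp1 : ∀ F x y, p F x y = p F y x)
    (hp2 : ∀ F, ∀ x ∈ F, ∀ y ∈ F, |p F x y| ≤ (C * ‖x‖) * (C * ‖y‖))
    (hp3 : ∀ F, ∀ x ∈ F, ‖x‖^2 ≤ p F x x)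
    (hp4 : ∀ F (x y z : X), x ∈ F → y ∈ F → x + y ∈ F → p F (x+y) z = p F x z + p F y z)
    (hp5 : ∀ F (c : ℝ) (x y : X), x ∈ F → c • x ∈ F → p F (c • x) y = c * p F x y) :
    ∃ Φ : X → X → ℝ,
      (∀ x y, Φ x y = Φ y x) ∧
      (∀ x y z, Φ (x + y) z = Φ x z + Φ y z) ∧
      (∀ (c : ℝ) (x y : X), Φ (c • x) y = c * Φ x y) ∧
      (∀ x, ‖x‖^2 ≤ Φ x x) ∧
      (∀ x, Φ x x ≤ C^2 * ‖x‖^2) := by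
  classical
  let U : Ultrafilter (Finset X) := Ultrafilter.of Filter.atTop
  have hUle : (U : Filter (Finset X)) ≤ Filter.atTop := Ultrafilter.of_le _
  have hmemU : ∀ x : X, ∀ᶠ F in (U : Filter (Finset X)), x ∈ F := by
    intro x
    have h1 : {F : Finset X | {x} ≤ F} ∈ (Filter.atTop : Filter (Finset X)) :=
      Filter.mem_atTop {x}
    refine hUle (Filter.mem_of_superset h1 ?_)
    intro F hF
    exact Finset.singleton_subset_iff.1 hF
  have hlim : ∀ x y : X, ∃ r : ℝ, Filter.Tendsto (fun F => p F x y) (U : Filter (Finset X)) (𝓝 r) := by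
    intro x y
    have hev : ∀ᶠ F in (U : Filter (Finset X)),
        p F x y ∈ Set.Icc (-((C*‖x‖)*(C*‖y‖))) ((C*‖x‖)*(C*‖y‖)) := by
      filter_upwards [hmemU x, hmemU y] with F hx hy
      have h2 := hp2 F x hx y hy
      rw [Set.mem_Icc]
      constructor
      · linarith [neg_abs_le (p F x y)]
      · linarith [le_abs_self (p F x y)]
    obtain ⟨r, _, hrt⟩ := isCompact_Icc.ultrafilter_le_nhds
      (U.map (fun F => p F x y)) (by
        rw [le_principal_iff, Ultrafilter.coe_map, Filter.mem_map]; exact hev)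
    exact ⟨r, hrt⟩
  choose Φ hΦ using hlim
  refine ⟨Φ, ?_, ?_, ?_, ?_, ?_⟩
  · intro x y
    refine tendsto_nhds_unique (hΦ x y) ?_
    exact (hΦ y x).congr (fun F => hp1 F y x)
  · intro x y z
    refine tendsto_nhds_unique (hΦ (x+y) z) ?_
    refine ((hΦ x z).add (hΦ y z)).congr' ?_
    filter_upwards [hmemU x, hmemU y, hmemU (x+y)] with F hx hy hxy
    exact (hp4 F x y z hx hy hxy).symm
  · intro cc x y
    refine tendsto_nhds_unique (hΦ (cc • x) y) ?_
    refine ((hΦ x y).const_mul cc).congr' ?_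
    filter_upwards [hmemU x, hmemU (cc • x)] with F hx hcx
    exact (hp5 F cc x y hx hcx).symm
  · intro x
    refine ge_of_tendsto (hΦ x x) ?_
    filter_upwards [hmemU x] with F hx
    exact hp3 F x hx
  · intro x
    refine le_of_tendsto (hΦ x x) ?_
    filter_upwards [hmemU x] with F hx
    have h2 := hp2 F x hx x hx
    have := le_abs_self (p F x x)
    nlinarith [norm_nonneg x]
end Glue


/-- Proposition 3 for 𝒦: if `X` has property (𝒦) and every compact operator `X → X` factors
through a real Hilbert space, then `X` is isomorphic to a Hilbert space. -/
theorem isomorphicToHilbert_of_property_K (X : Type u) [NormedAddCommGroup X]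
    [NormedSpace ℝ X] [CompleteSpace X] (hX : PropertyK X)
    (h : ∀ v : X →L[ℝ] X, CompactOp v →
      ∃ (H : Type u) (_ : NormedAddCommGroup H) (_ : InnerProductSpace ℝ H)
        (_ : CompleteSpace H) (a : X →L[ℝ] H) (b : H →L[ℝ] X), v = b.comp a) :
    IsomorphicToHilbert X := by
  classical
  obtain ⟨C, hC1, huni⟩ := uniform_cover X hX h
  have hdata : ∀ F : Finset X, ∃ p : X → X → ℝ,
      (∀ x y, p x y = p y x) ∧
      (∀ x ∈ F, ∀ y ∈ F, |p x y| ≤ (C * ‖x‖) * (C * ‖y‖)) ∧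
      (∀ x ∈ F, ‖x‖^2 ≤ p x x) ∧
      (∀ x y z : X, x ∈ F → y ∈ F → x + y ∈ F → p (x+y) z = p x z + p y z) ∧
      (∀ (c : ℝ) (x y : X), x ∈ F → c • x ∈ F → p (c • x) y = c * p x y) := by
    intro F
    set KF : Set X := (fun x => ‖x‖⁻¹ • x) '' (F : Set X) with hKF
    have hKFc : IsCompact KF := (F.finite_toSet.image _).isCompact
    have hKFb : KF ⊆ Metric.closedBall 0 1 := by
      rintro y ⟨x, hx, rfl⟩
      rw [mem_closedBall_zero_iff, norm_smul, norm_inv, norm_norm]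
      rcases eq_or_ne x 0 with h0 | h0
      · simp [h0]
      · rw [inv_mul_cancel₀ (norm_ne_zero_iff.2 h0)]
    obtain ⟨H, g1, g2, g3, b, hb1, hcov⟩ := huni KF hKFc hKFb
    have hFh : ∀ x ∈ F, ∃ hh : H, b hh = x ∧ ‖hh‖ ≤ C * ‖x‖ := by
      intro x hx
      rcases eq_or_ne x 0 with h0 | h0
      · refine ⟨0, by simp [h0], by simp [h0]⟩
      · obtain ⟨z, hz, hbz⟩ := hcov ⟨x, hx, rfl⟩
        refine ⟨‖x‖ • z, ?_, ?_⟩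
        · rw [map_smul, hbz, smul_smul, mul_inv_cancel₀ (norm_ne_zero_iff.2 h0), one_smul]
        · rw [norm_smul, norm_norm]
          calc ‖x‖ * ‖z‖ ≤ ‖x‖ * C :=
                mul_le_mul_of_nonneg_left (mem_closedBall_zero_iff.1 hz) (norm_nonneg x)
            _ = C * ‖x‖ := mul_comm _ _
    exact finset_form b hb1 C F hFh
  choose p hp1 hp2 hp3 hp4 hp5 using hdata
  obtain ⟨Φ, hsymm, haddl, hsmull, hlow, hhigh⟩ := glue C hC1 p hp1 hp2 hp3 hp4 hp5
  exact assembly Φ C (le_trans zero_le_one hC1) hsymm haddl hsmull hlow hhigh
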